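/- Fix d ≥ 1 and a real number ρ > 0, and set n(ρ) = ⌈ρ⁻¹(d+1)⌉. Let B = {x ∈ ℝ^{d+1} : x_i ≥ 0 for all i, Σ_{i=1}^{d+1} x_i = 1} and R_ρ = (1/n(ρ))·{a ∈ ℤ^{d+1} : a_i ≥ 0 for all i, Σ_{i=1}^{d+1} a_i = n(ρ)}. Then for every x ∈ B there exists r ∈ R_ρ such that r_i ≤ x_i < r_i + 1/n(ρ) for all i = 1, …, d (equivalently, B ⊆ R_ρ + Z_ρ where Z_ρ = [0, 1/n(ρ))^d × ℝ). -/

import Mathlib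

open MeasureTheory Set Pointwise

/-- **Covering lemma.** Fix `d ≥ 1`, `ρ > 0` and set `n = ⌈ρ⁻¹ (d+1)⌉`. For every point
`x` of the standard simplex `B = {x ∈ ℝ^{d+1} : x ≥ 0, ∑ xᵢ = 1}` there is a nonnegative
integer vector `a` with `∑ aᵢ = n` such that `aᵢ/n ≤ xᵢ < aᵢ/n + 1/n` for the first `d`
coordinates (i.e. `B ⊆ R_ρ + Z_ρ` where `Z_ρ = [0, 1/n)^d × ℝ`). -/
theorem simplex_covered_by_cylinders (d : ℕ) (hd : 1 ≤ d) (ρ : ℝ) (hρ : 0 < ρ)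
    (n : ℕ) (hn : n = ⌈ρ⁻¹ * ((d : ℝ) + 1)⌉₊)
    (x : Fin (d + 1) → ℝ) (hx0 : ∀ i, 0 ≤ x i) (hx1 : ∑ i, x i = 1) :
    ∃ a : Fin (d + 1) → ℤ, (∀ i, 0 ≤ a i) ∧ (∑ i, a i = (n : ℤ)) ∧
      ∀ i : Fin d, (a i.castSucc : ℝ) / n ≤ x i.castSucc ∧
        x i.castSucc < (a i.castSucc : ℝ) / n + 1 / n := by
  have hnpos : 0 < n := by
    rw [hn]
    apply Nat.ceil_pos.2
    positivity
  have hnR : (0:ℝ) < (n:ℝ) := by exact_mod_cast hnpos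
  set S : ℤ := ∑ j : Fin d, ⌊(n:ℝ) * x j.castSucc⌋ with hS
  have hsum_le : ∑ j : Fin d, x j.castSucc ≤ 1 := by
    rw [Fin.sum_univ_castSucc] at hx1
    nlinarith [hx0 (Fin.last d)]
  have hSle : S ≤ (n:ℤ) := by
    have h1 : (S:ℝ) ≤ ∑ j : Fin d, (n:ℝ) * x j.castSucc := by
      rw [hS]
      push_cast
      exact Finset.sum_le_sum fun j _ => Int.floor_le _
    have h2 : ∑ j : Fin d, (n:ℝ) * x j.castSucc ≤ (n:ℝ) := by
      rw [← Finset.mul_sum]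
      nlinarith
    exact_mod_cast h1.trans h2
  refine ⟨fun i => if h : (i:ℕ) < d then ⌊(n:ℝ) * x i⌋ else (n:ℤ) - S, ?_, ?_, ?_⟩
  · intro i
    by_cases h : (i:ℕ) < d
    · dsimp only
      rw [dif_pos h]
      exact Int.floor_nonneg.2 (mul_nonneg hnR.le (hx0 i))
    · dsimp only
      rw [dif_neg h]
      omega
  · dsimp only
    rw [Fin.sum_univ_castSucc]
    have hlast : ¬ ((Fin.last d : Fin (d+1)) : ℕ) < d := by simp
    rw [dif_neg hlast]
    have : ∀ j : Fin d, (if h : ((j.castSucc : Fin (d+1)) : ℕ) < d then ⌊(n:ℝ) * x j.castSucc⌋ else (n:ℤ) - S) = ⌊(n:ℝ) * x j.castSucc⌋ := by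
      intro j
      rw [dif_pos]
      simp [j.isLt]
    rw [Finset.sum_congr rfl (fun j _ => this j), ← hS]
    ring
  · intro i
    have hi : ((i.castSucc : Fin (d+1)) : ℕ) < d := by simp [i.isLt]
    dsimp only
    rw [dif_pos hi]
    constructor
    · rw [div_le_iff₀ hnR]
      have := Int.floor_le ((n:ℝ) * x i.castSucc)
      linarith [this]
    · rw [← add_div, lt_div_iff₀ hnR]
      have := Int.lt_floor_add_one ((n:ℝ) * x i.castSucc)
      linarith
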